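/- Let p ≥ 3 be a prime, let G ∈ ℚ_p[[x]], and let D = Σ_{i=0}^N g_i (d/dx)^i be a nice differential operator of order N. Let M ≥ 2 be an integer such that: C_M(G) ≠ 0; for every j ≤ M, either C_j(G) = 0 or v_p(C_j(G)) ≥ v_p(C_M(G)) + (M − j); and for every j > M with C_j(G) ≠ 0, v_p(C_j(G)) > v_p(C_M(G)) − (j − M) (i.e. M is the length of the slope ≤ −1 part of the Newton polygon of G). Suppose that the set {v_p(C_i(D(G))) : i ≥ 0, C_i(D(G)) ≠ 0} is nonempty and attains a minimum, and let s be the least index i at which this minimum is attained. Then M < κ_p · (N + s). -/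

import Mathlib

open PowerSeries

/-- The action of the differential operator `D = Σ_{i=0}^N g_i (d/dx)^i` on a power series
over `ℚ_p`. -/
noncomputable def diffOpApply (p : ℕ) [Fact p.Prime] (N : ℕ)
    (g : ℕ → PowerSeries ℚ_[p]) (G : PowerSeries ℚ_[p]) : PowerSeries ℚ_[p] :=
  ∑ i ∈ Finset.range (N + 1), g i * (⇑(PowerSeries.derivative ℚ_[p]))^[i] G

section Aux

variable {p : ℕ} [Fact p.Prime]

lemma aux_norm_nat_le_one (n : ℕ) : ‖(n : ℚ_[p])‖ ≤ 1 := by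
  have := Padic.norm_int_le_one (p := p) (n : ℤ)
  push_cast at this
  exact this

lemma aux_norm_nat_dvd {a b : ℕ} (h : b ∣ a) : ‖(a : ℚ_[p])‖ ≤ ‖(b : ℚ_[p])‖ := by
  obtain ⟨c, rfl⟩ := h
  push_cast
  rw [norm_mul]
  calc ‖(b : ℚ_[p])‖ * ‖(c : ℚ_[p])‖ ≤ ‖(b : ℚ_[p])‖ * 1 := by
        gcongr
        exact aux_norm_nat_le_one c
    _ = ‖(b : ℚ_[p])‖ := mul_one _

lemma aux_coeff_iter_deriv (G : PowerSeries ℚ_[p]) (i n : ℕ) :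
    PowerSeries.coeff (R := ℚ_[p]) n ((⇑(PowerSeries.derivative ℚ_[p]))^[i] G) =
      ((n + i).descFactorial i : ℚ_[p]) * PowerSeries.coeff (R := ℚ_[p]) (n + i) G := by
  induction i generalizing G n with
  | zero => simp
  | succ i ih =>
    rw [Function.iterate_succ_apply, ih, PowerSeries.coeff_derivative]
    have hd : (n + (i + 1)).descFactorial (i + 1) = (n + i + 1) * (n + i).descFactorial i := by
      have h : n + (i + 1) = (n + i) + 1 := rfl
      rw [h, Nat.succ_descFactorial_succ]
    rw [hd]
    have he : n + i + 1 = n + (i + 1) := by omega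
    rw [he]
    push_cast
    ring

lemma aux_coeff_diffOp (N : ℕ) (g : ℕ → PowerSeries ℚ_[p]) (G : PowerSeries ℚ_[p]) (k : ℕ) :
    PowerSeries.coeff (R := ℚ_[p]) k (diffOpApply p N g G) =
      ∑ z ∈ (Finset.range (N + 1)) ×ˢ (Finset.HasAntidiagonal.antidiagonal k),
        PowerSeries.coeff (R := ℚ_[p]) z.2.1 (g z.1) *
          (((z.2.2 + z.1).descFactorial z.1 : ℚ_[p]) *
            PowerSeries.coeff (R := ℚ_[p]) (z.2.2 + z.1) G) := by
  rw [diffOpApply, map_sum, Finset.sum_product]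
  refine Finset.sum_congr rfl fun i _ => ?_
  rw [PowerSeries.coeff_mul]
  exact Finset.sum_congr rfl fun x _ => by rw [aux_coeff_iter_deriv]

lemma aux_zpow_mono {a b : ℤ} (hp : 1 < (p : ℝ)) (h : a ≤ b) : (p : ℝ) ^ a ≤ (p : ℝ) ^ b :=
  zpow_le_zpow_right₀ hp.le h

end Aux

set_option maxHeartbeats 1600000 in
/-- key unnamed Lemma at the end of Section 3 of Balakrishnan–Dogra,
"An effective Chabauty–Kim theorem".
Let `p ≥ 3` be prime, `G ∈ ℚ_p[[x]]`, and `D = Σ_{i=0}^N g_i (d/dx)^i` a nice differential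
operator of order `N` (all coefficients of each `g_i` lie in `ℤ_p`, and the constant
coefficient of `g_N` is a `p`-adic unit).  Let `M ≥ 2` be the length of the slope `≤ −1`
part of the Newton polygon of `G`.  If the valuations of the nonzero coefficients of `D(G)`
attain a minimum, first attained at index `s`, then `M < κ_p · (N + s)`. -/
theorem newton_polygon_bound_of_nice_diffOp (p : ℕ) [Fact p.Prime] (hp3 : 3 ≤ p)
    (G : PowerSeries ℚ_[p]) (N : ℕ) (g : ℕ → PowerSeries ℚ_[p])
    (hnice_int : ∀ i ≤ N, ∀ m, ‖PowerSeries.coeff (R := ℚ_[p]) m (g i)‖ ≤ 1)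
    (hnice_unit : ‖PowerSeries.coeff (R := ℚ_[p]) 0 (g N)‖ = 1)
    (M : ℕ) (hM : 2 ≤ M)
    (hMne : PowerSeries.coeff (R := ℚ_[p]) M G ≠ 0)
    (hslope_le : ∀ j ≤ M, PowerSeries.coeff (R := ℚ_[p]) j G = 0 ∨
      (PowerSeries.coeff (R := ℚ_[p]) M G).valuation + ((M : ℤ) - (j : ℤ)) ≤
        (PowerSeries.coeff (R := ℚ_[p]) j G).valuation)
    (hslope_gt : ∀ j, M < j → PowerSeries.coeff (R := ℚ_[p]) j G ≠ 0 →
      (PowerSeries.coeff (R := ℚ_[p]) M G).valuation - ((j : ℤ) - (M : ℤ)) <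
        (PowerSeries.coeff (R := ℚ_[p]) j G).valuation)
    (s : ℕ)
    (hs_ne : PowerSeries.coeff (R := ℚ_[p]) s (diffOpApply p N g G) ≠ 0)
    (hs_min : ∀ j, PowerSeries.coeff (R := ℚ_[p]) j (diffOpApply p N g G) ≠ 0 →
      (PowerSeries.coeff (R := ℚ_[p]) s (diffOpApply p N g G)).valuation ≤
        (PowerSeries.coeff (R := ℚ_[p]) j (diffOpApply p N g G)).valuation)
    (hs_least : ∀ j < s, PowerSeries.coeff (R := ℚ_[p]) j (diffOpApply p N g G) ≠ 0 →
      (PowerSeries.coeff (R := ℚ_[p]) s (diffOpApply p N g G)).valuation <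
        (PowerSeries.coeff (R := ℚ_[p]) j (diffOpApply p N g G)).valuation) :
    (M : ℝ) < (1 + ((p : ℝ) - 1) / ((p : ℝ) - 2) * (1 / Real.log p)) * ((N : ℝ) + (s : ℝ)) := by
  have hppos : (0 : ℝ) < p := by positivity
  have hp1 : (1 : ℝ) < p := by
    have : (3 : ℝ) ≤ p := by exact_mod_cast hp3
    linarith
  have hp2R : (0 : ℝ) < (p : ℝ) - 2 := by
    have : (3 : ℝ) ≤ p := by exact_mod_cast hp3
    linarith
  have hL : 0 < Real.log p := Real.log_pos hp1
  have hL2 : Real.log p < (p : ℝ) - 1 :=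
    Real.log_lt_sub_one_of_pos hppos (by linarith)
  -- easy case:  M ≤ N + s
  by_cases hcase : M ≤ N + s
  · have hA : (M : ℝ) ≤ (N : ℝ) + s := by exact_mod_cast hcase
    have hM2 : (2 : ℝ) ≤ (M : ℝ) := by exact_mod_cast hM
    have hx : 0 < ((p : ℝ) - 1) / ((p : ℝ) - 2) * (1 / Real.log p) :=
      mul_pos (div_pos (by linarith) hp2R) (one_div_pos.mpr hL)
    nlinarith [mul_pos hx (lt_of_lt_of_le (by linarith : (0:ℝ) < 2) (hM2.trans hA))]
  -- hard case
  push_neg at hcase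
  -- N + s < M
  set F := diffOpApply p N g G with hF
  have hNM : N ≤ M := by omega
  set T : ℕ := M - (N + s) with hT
  have hT1 : 1 ≤ T := by omega
  have hGM : 0 < ‖PowerSeries.coeff (R := ℚ_[p]) M G‖ := by
    simpa [norm_pos_iff] using hMne
  -- slope hypothesis in norm form
  have hslope' : ∀ j, j ≤ M → ‖PowerSeries.coeff (R := ℚ_[p]) j G‖ ≤
      ‖PowerSeries.coeff (R := ℚ_[p]) M G‖ * (p : ℝ) ^ ((j : ℤ) - (M : ℤ)) := by
    intro j hj
    rcases hslope_le j hj with h0 | hv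
    · rw [h0, norm_zero]
      positivity
    · by_cases hj0 : PowerSeries.coeff (R := ℚ_[p]) j G = 0
      · rw [hj0, norm_zero]; positivity
      · rw [Padic.norm_eq_zpow_neg_valuation hj0, Padic.norm_eq_zpow_neg_valuation hMne,
          ← zpow_add₀ (ne_of_gt hppos)]
        refine aux_zpow_mono hp1 ?_
        omega
  -- min hypothesis in norm form
  have hFle : ∀ k, ‖PowerSeries.coeff (R := ℚ_[p]) k F‖ ≤ ‖PowerSeries.coeff (R := ℚ_[p]) s F‖ := by
    intro k
    by_cases hk0 : PowerSeries.coeff (R := ℚ_[p]) k F = 0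
    · rw [hk0, norm_zero]; positivity
    · rw [Padic.norm_eq_zpow_neg_valuation hk0, Padic.norm_eq_zpow_neg_valuation hs_ne]
      refine aux_zpow_mono hp1 ?_
      have := hs_min k hk0
      omega
  set C : ℝ := ‖PowerSeries.coeff (R := ℚ_[p]) M G‖ * (p : ℝ) ^ (-(T : ℤ)) with hC
  have hCpos : 0 < C := by positivity
  -- bound on the minimal coefficient of F
  have hFs : ‖PowerSeries.coeff (R := ℚ_[p]) s F‖ ≤ C := by
    rw [hF, aux_coeff_diffOp]
    apply IsUltrametricDist.norm_sum_le_of_forall_le_of_nonneg hCpos.le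
    rintro ⟨i, a, b⟩ hz
    simp only [Finset.mem_product, Finset.mem_range, Finset.HasAntidiagonal.mem_antidiagonal] at hz
    obtain ⟨hiN, hab⟩ := hz
    have hjM : b + i ≤ M := by omega
    have h1 : ‖PowerSeries.coeff (R := ℚ_[p]) a (g i) *
        (((b + i).descFactorial i : ℚ_[p]) * PowerSeries.coeff (R := ℚ_[p]) (b + i) G)‖ ≤
        1 * (1 * ‖PowerSeries.coeff (R := ℚ_[p]) (b + i) G‖) := by
      rw [norm_mul, norm_mul]
      refine mul_le_mul (hnice_int i (by omega) a)
        (mul_le_mul (aux_norm_nat_le_one _) le_rfl (norm_nonneg _) zero_le_one)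
        (by positivity) zero_le_one
    rw [one_mul, one_mul] at h1
    refine h1.trans ((hslope' _ hjM).trans ?_)
    rw [hC]
    refine mul_le_mul_of_nonneg_left ?_ (norm_nonneg _)
    refine aux_zpow_mono hp1 ?_
    omega
  -- the key triangular induction
  have key : ∀ k, k ≤ M - N →
      ‖((k.factorial * (k + N).descFactorial N : ℕ) : ℚ_[p]) *
        PowerSeries.coeff (R := ℚ_[p]) (k + N) G‖ ≤ C := by
    intro k
    induction k using Nat.strong_induction_on with
    | _ k IH =>
      intro hk
      -- the row equation at row k
      have hrow := aux_coeff_diffOp N g G k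
      rw [← hF] at hrow
      set S := (Finset.range (N + 1)) ×ˢ (Finset.HasAntidiagonal.antidiagonal k) with hS
      set f : ℕ × ℕ × ℕ → ℚ_[p] := fun z =>
        PowerSeries.coeff (R := ℚ_[p]) z.2.1 (g z.1) *
          (((z.2.2 + z.1).descFactorial z.1 : ℚ_[p]) *
            PowerSeries.coeff (R := ℚ_[p]) (z.2.2 + z.1) G) with hf
      have he₀ : (⟨N, 0, k⟩ : ℕ × ℕ × ℕ) ∈ S := by
        simp [hS, Finset.mem_product]
      have hsplit : f ⟨N, 0, k⟩ = PowerSeries.coeff (R := ℚ_[p]) k F -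
          ∑ z ∈ S.erase ⟨N, 0, k⟩, f z := by
        rw [hrow, ← Finset.add_sum_erase S f he₀]
        ring
      -- compute ‖k! * f e₀‖ : note f e₀ = coeff 0 (g N) * (desc * coeff (k+N) G)
      have hfe₀ : (k.factorial : ℚ_[p]) * f ⟨N, 0, k⟩ =
          PowerSeries.coeff (R := ℚ_[p]) 0 (g N) *
            (((k.factorial * (k + N).descFactorial N : ℕ) : ℚ_[p]) *
              PowerSeries.coeff (R := ℚ_[p]) (k + N) G) := by
        simp only [hf]
        push_cast
        ring
      -- goal norm equals ‖k! * f e₀‖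
      have hnorm_eq : ‖(k.factorial : ℚ_[p]) * f ⟨N, 0, k⟩‖ =
          ‖((k.factorial * (k + N).descFactorial N : ℕ) : ℚ_[p]) *
            PowerSeries.coeff (R := ℚ_[p]) (k + N) G‖ := by
        rw [hfe₀, norm_mul, hnice_unit, one_mul]
      rw [← hnorm_eq, hsplit]
      have hexpand : (k.factorial : ℚ_[p]) * (PowerSeries.coeff (R := ℚ_[p]) k F -
          ∑ z ∈ S.erase ⟨N, 0, k⟩, f z) =
          (k.factorial : ℚ_[p]) * PowerSeries.coeff (R := ℚ_[p]) k F +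
          (- ((k.factorial : ℚ_[p]) * ∑ z ∈ S.erase ⟨N, 0, k⟩, f z)) := by ring
      rw [hexpand]
      refine le_trans (Padic.nonarchimedean _ _) (max_le ?_ ?_)
      · -- ‖k! * coeff k F‖ ≤ C
        rw [norm_mul]
        calc ‖(k.factorial : ℚ_[p])‖ * ‖PowerSeries.coeff (R := ℚ_[p]) k F‖ ≤
            1 * ‖PowerSeries.coeff (R := ℚ_[p]) s F‖ := by
              gcongr
              · exact aux_norm_nat_le_one _
              · exact hFle k
          _ ≤ C := by rw [one_mul]; exact hFs
      · rw [norm_neg, Finset.mul_sum]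
        apply IsUltrametricDist.norm_sum_le_of_forall_le_of_nonneg hCpos.le
        rintro ⟨i, a, b⟩ hz
        simp only [Finset.mem_erase, hS, Finset.mem_product, Finset.mem_range,
          Finset.HasAntidiagonal.mem_antidiagonal] at hz
        obtain ⟨hne, hiN, hab⟩ := hz
        have hiN' : i ≤ N := by omega
        -- j := b + i
        have hterm : (k.factorial : ℚ_[p]) * f ⟨i, a, b⟩ =
            PowerSeries.coeff (R := ℚ_[p]) a (g i) *
              (((k.factorial * (b + i).descFactorial i : ℕ) : ℚ_[p]) *
                PowerSeries.coeff (R := ℚ_[p]) (b + i) G) := by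
          simp only [hf]
          push_cast
          ring
        rw [hterm, norm_mul, norm_mul]
        have hga : ‖PowerSeries.coeff (R := ℚ_[p]) a (g i)‖ ≤ 1 := hnice_int i hiN' a
        rcases lt_or_ge (b + i) N with hj | hj
        · -- low-order coefficient of G : use the slope bound
          have hjM : b + i ≤ M := by omega
          calc ‖PowerSeries.coeff (R := ℚ_[p]) a (g i)‖ *
              (‖((k.factorial * (b + i).descFactorial i : ℕ) : ℚ_[p])‖ *
                ‖PowerSeries.coeff (R := ℚ_[p]) (b + i) G‖) ≤
              1 * (1 * (‖PowerSeries.coeff (R := ℚ_[p]) M G‖ *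
                (p : ℝ) ^ (((b + i : ℕ) : ℤ) - (M : ℤ)))) := by
                refine mul_le_mul hga (mul_le_mul (aux_norm_nat_le_one _) (hslope' _ hjM)
                  (norm_nonneg _) zero_le_one) (by positivity) zero_le_one
            _ ≤ C := by
                rw [one_mul, one_mul, hC]
                refine mul_le_mul_of_nonneg_left ?_ (norm_nonneg _)
                refine aux_zpow_mono hp1 ?_
                omega
        · -- high-order coefficient : use the inductive hypothesis
          set k' : ℕ := b + i - N with hk'
          have hjk : b + i < k + N := by
            rcases Nat.lt_or_ge (b + i) (k + N) with h | h
            · exact h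
            · exfalso
              have hbk : b ≤ k := by omega
              have : b = k ∧ i = N := by omega
              obtain ⟨rfl, rfl⟩ := this
              have : a = 0 := by omega
              exact hne (by simp [this])
          have hk'k : k' < k := by omega
          have hk'MN : k' ≤ M - N := by omega
          have hj' : k' + N = b + i := by omega
          have IH' := IH k' hk'k hk'MN
          rw [hj'] at IH'
          -- divisibility : (k'! * (b+i).descFactorial N) ∣ (k! * (b+i).descFactorial i)
          have hdvd : (k'.factorial * (b + i).descFactorial N) ∣
              (k.factorial * (b + i).descFactorial i) := by
            have h1 : k'.factorial * (b + i).descFactorial N = (b + i).factorial := by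
              have : (b + i) - N = k' := by omega
              rw [← this]
              exact Nat.factorial_mul_descFactorial hj
            have h2 : b.factorial * (b + i).descFactorial i = (b + i).factorial := by
              have h := Nat.factorial_mul_descFactorial (show i ≤ b + i by omega)
              simpa using h
            rw [h1]
            have hbk : b ≤ k := by omega
            obtain ⟨c, hc⟩ := Nat.factorial_dvd_factorial hbk
            refine ⟨c, ?_⟩
            calc k.factorial * (b + i).descFactorial i
                = (b.factorial * c) * (b + i).descFactorial i := by rw [← hc]
              _ = (b.factorial * (b + i).descFactorial i) * c := by ring
              _ = (b + i).factorial * c := by rw [h2]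
          have hnn : ‖((k.factorial * (b + i).descFactorial i : ℕ) : ℚ_[p])‖ ≤
              ‖((k'.factorial * (b + i).descFactorial N : ℕ) : ℚ_[p])‖ :=
            aux_norm_nat_dvd hdvd
          calc ‖PowerSeries.coeff (R := ℚ_[p]) a (g i)‖ *
              (‖((k.factorial * (b + i).descFactorial i : ℕ) : ℚ_[p])‖ *
                ‖PowerSeries.coeff (R := ℚ_[p]) (b + i) G‖) ≤
              1 * (‖((k'.factorial * (b + i).descFactorial N : ℕ) : ℚ_[p])‖ *
                ‖PowerSeries.coeff (R := ℚ_[p]) (b + i) G‖) := by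
                refine mul_le_mul hga (mul_le_mul_of_nonneg_right hnn (norm_nonneg _))
                  (by positivity) zero_le_one
            _ = ‖((k'.factorial * (b + i).descFactorial N : ℕ) : ℚ_[p]) *
                PowerSeries.coeff (R := ℚ_[p]) (b + i) G‖ := by rw [one_mul, norm_mul]
            _ ≤ C := IH'
  -- extract the factorial bound
  have hfinal := key (M - N) le_rfl
  rw [Nat.sub_add_cancel hNM] at hfinal
  have hfact : (M - N).factorial * M.descFactorial N = M.factorial :=
    Nat.factorial_mul_descFactorial hNM
  rw [hfact] at hfinal
  rw [norm_mul, hC] at hfinal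
  have hMfact : ‖((M.factorial : ℕ) : ℚ_[p])‖ ≤ (p : ℝ) ^ (-(T : ℤ)) := by
    have := hfinal
    rw [mul_comm ‖PowerSeries.coeff (R := ℚ_[p]) M G‖ ((p : ℝ) ^ (-(T : ℤ)))] at this
    exact le_of_mul_le_mul_right this hGM
  -- p^T ∣ M!
  have hdvdMf : p ^ T ∣ M.factorial := by
    have hcast : ((M.factorial : ℕ) : ℚ_[p]) = ((M.factorial : ℤ) : ℚ_[p]) := by push_cast; rfl
    rw [hcast] at hMfact
    have := (Padic.norm_int_le_pow_iff_dvd (M.factorial : ℤ) T).mp hMfact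
    exact_mod_cast this
  have hppr : p.Prime := Fact.out
  have hvT : T ≤ (M.factorial).factorization p :=
    (Nat.Prime.pow_dvd_iff_le_factorization hppr (Nat.factorial_ne_zero M)).mp hdvdMf
  have hval : T ≤ padicValNat p (M.factorial) := by
    rwa [Nat.factorization_def _ hppr] at hvT
  have hleg : (p - 1) * padicValNat p (M.factorial) ≤ M := by
    rw [sub_one_mul_padicValNat_factorial]
    omega
  have hnat : (p - 1) * T ≤ M := le_trans (Nat.mul_le_mul_left _ hval) hleg
  -- cast to ℝ
  have hp1' : 1 ≤ p := by omega
  have hNsM : N + s ≤ M := hcase.le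
  have hTc : (T : ℝ) = (M : ℝ) - ((N : ℝ) + (s : ℝ)) := by
    rw [hT, Nat.cast_sub hNsM]
    push_cast
    ring
  have hreal : ((p : ℝ) - 1) * ((M : ℝ) - ((N : ℝ) + (s : ℝ))) ≤ (M : ℝ) := by
    have h1 := (Nat.cast_le (α := ℝ)).mpr hnat
    push_cast [Nat.cast_sub hp1'] at h1
    rw [hTc] at h1
    linarith
  -- final arithmetic
  set A : ℝ := (N : ℝ) + (s : ℝ) with hA
  have hM2 : (2 : ℝ) ≤ (M : ℝ) := by exact_mod_cast hM
  have hApos : 0 < A := by nlinarith [hreal, hM2, hp1]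
  set L : ℝ := Real.log p with hLdef
  have hexpand : (1 + ((p : ℝ) - 1) / ((p : ℝ) - 2) * (1 / L)) * A * (((p : ℝ) - 2) * L) =
      A * ((p : ℝ) - 2) * L + A * ((p : ℝ) - 1) := by
    field_simp
  have hstep : (M : ℝ) * (((p : ℝ) - 2) * L) <
      (1 + ((p : ℝ) - 1) / ((p : ℝ) - 2) * (1 / L)) * A * (((p : ℝ) - 2) * L) := by
    rw [hexpand]
    nlinarith [mul_le_mul_of_nonneg_right hreal hL.le, mul_lt_mul_of_pos_left hL2 hApos]
  have hpos : (0 : ℝ) < ((p : ℝ) - 2) * L := mul_pos hp2R hL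
  exact lt_of_mul_lt_mul_right hstep hpos.le
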